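/- The Krammer representation matrices satisfy the far commutation braid relation: for |i - k| ≥ 2, the linear maps σ_i and σ_k on the free Λ-module V with basis {F_{j,l} : 1 ≤ j < l ≤ n} commute. -/

import Mathlib

set_option maxHeartbeats 1000000
set_option synthInstance.maxHeartbeats 400000


open LaurentPolynomial in
/-- The ring `Λ = ℤ[q^{±1}, t^{±1}]` of Laurent polynomials in two variables. -/
abbrev Lam : Type := LaurentPolynomial (LaurentPolynomial ℤ)

/-- The variable `q` of `Λ`. -/
noncomputable def lamq : Lam := LaurentPolynomial.C (LaurentPolynomial.T 1)

/-- The variable `t` of `Λ`. -/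
noncomputable def lamt : Lam := LaurentPolynomial.T 1

/-- The index set `{(j,k) : 1 ≤ j < k ≤ n}` for the basis of the Krammer representation. -/
abbrev KIdx (n : ℕ) := {p : ℕ × ℕ // 1 ≤ p.1 ∧ p.1 < p.2 ∧ p.2 ≤ n}

/-- The free `Λ`-module `V` with basis `F_{j,k}` for `1 ≤ j < k ≤ n`. -/
abbrev KV (n : ℕ) := KIdx n →₀ Lam

/-- The basis vector `F_{j,k}`. -/
noncomputable def KF (n : ℕ) (j k : ℕ) (h : 1 ≤ j ∧ j < k ∧ k ≤ n) : KV n :=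
  Finsupp.single ⟨(j, k), h⟩ 1

/-- The image of the basis vector `F_{j,k}` under Krammer's map `σ_i`. -/
noncomputable def kimg (n : ℕ) (i : ℕ) : KIdx n → KV n
  | ⟨(j, k), hp⟩ =>
    if h1 : i + 1 = j ∧ 1 ≤ i then
      lamq • KF n i k ⟨h1.2, by omega, by omega⟩
        + (lamq ^ 2 - lamq) • KF n i j ⟨h1.2, by omega, by omega⟩
        + (1 - lamq) • KF n j k hp
    else if h2 : i = j ∧ i + 1 = k then
      (-(lamt * lamq ^ 2)) • KF n j k hp
    else if h3 : i = j then
      KF n (j + 1) k ⟨by omega, by omega, by omega⟩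
    else if h4 : i + 1 = k then
      lamq • KF n j i ⟨by omega, by omega, by omega⟩
        + (1 - lamq) • KF n j k hp
        + ((1 - lamq) * (lamq * lamt)) • KF n i k ⟨by omega, by omega, by omega⟩
    else if h5 : i = k ∧ k + 1 ≤ n then
      KF n j (k + 1) ⟨by omega, by omega, by omega⟩
    else
      KF n j k hp

/-- Krammer's linear map `σ_i` on `V` (for `1 ≤ i ≤ n-1`). -/
noncomputable def krammerσ (n : ℕ) (i : ℕ) : KV n →ₗ[Lam] KV n :=
  Finsupp.lift (KV n) Lam (KIdx n) (kimg n i)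


lemma krammer_sigma_single (n i j k : ℕ) (h : 1 ≤ j ∧ j < k ∧ k ≤ n) :
    krammerσ n i (KF n j k h) = kimg n i ⟨(j, k), h⟩ := by
  simp [krammerσ, KF, Finsupp.lift_apply, Finsupp.sum_single_index]

section CaseLemmas
variable {n i j k : ℕ} {hp : 1 ≤ j ∧ j < k ∧ k ≤ n}

lemma kimg_A (h1 : i + 1 = j) (h2 : 1 ≤ i) :
    kimg n i ⟨(j, k), hp⟩ = lamq • KF n i k ⟨h2, by omega, by omega⟩
      + (lamq ^ 2 - lamq) • KF n i j ⟨h2, by omega, by omega⟩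
      + (1 - lamq) • KF n j k hp := by
  simp only [kimg]; rw [dif_pos ⟨h1, h2⟩]

lemma kimg_B (h1 : i = j) (h2 : i + 1 = k) :
    kimg n i ⟨(j, k), hp⟩ = (-(lamt * lamq ^ 2)) • KF n j k hp := by
  simp only [kimg]; rw [dif_neg (by omega), dif_pos ⟨h1, h2⟩]

lemma kimg_C (h1 : i = j) (h2 : i + 1 ≠ k) :
    kimg n i ⟨(j, k), hp⟩ = KF n (j + 1) k ⟨by omega, by omega, by omega⟩ := by
  simp only [kimg]; rw [dif_neg (by omega), dif_neg (by omega), dif_pos h1]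

lemma kimg_D (h1 : i + 1 = k) (h2 : i ≠ j) :
    kimg n i ⟨(j, k), hp⟩ = lamq • KF n j i ⟨by omega, by omega, by omega⟩
      + (1 - lamq) • KF n j k hp
      + ((1 - lamq) * (lamq * lamt)) • KF n i k ⟨by omega, by omega, by omega⟩ := by
  simp only [kimg]
  rw [dif_neg (by omega), dif_neg (by omega), dif_neg h2, dif_pos h1]

lemma kimg_E (h1 : i = k) (h2 : k + 1 ≤ n) :
    kimg n i ⟨(j, k), hp⟩ = KF n j (k + 1) ⟨by omega, by omega, by omega⟩ := by
  simp only [kimg]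
  rw [dif_neg (by omega), dif_neg (by omega), dif_neg (by omega), dif_neg (by omega),
    dif_pos ⟨h1, h2⟩]

lemma kimg_F (h1 : i + 1 ≠ j) (h2 : i ≠ j) (h3 : i + 1 ≠ k) (h4 : ¬(i = k ∧ k + 1 ≤ n)) :
    kimg n i ⟨(j, k), hp⟩ = KF n j k hp := by
  simp only [kimg]
  rw [dif_neg (by omega), dif_neg (by omega), dif_neg h2, dif_neg h3, dif_neg h4]

end CaseLemmas

set_option maxHeartbeats 8000000 in
lemma krammer_far_commutation_aux (n i k : ℕ) (hi1 : 1 ≤ i) (hkn : k < n)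
    (hik : i + 2 ≤ k) :
    (krammerσ n i).comp (krammerσ n k) = (krammerσ n k).comp (krammerσ n i) := by
  refine Finsupp.lhom_ext fun p b => ?_
  obtain ⟨⟨j, l⟩, hp⟩ := p
  have hb : (Finsupp.single (⟨(j, l), hp⟩ : KIdx n) b)
      = b • KF n j l hp := by simp [KF, Finsupp.smul_single]
  simp only [LinearMap.comp_apply, hb, map_smul]
  congr 1
  rw [krammer_sigma_single, krammer_sigma_single]
  simp only [kimg]
  split_ifs <;>
    first
      | omega
      | (exfalso; omega)
      | (simp (disch := omega) only [map_add, map_smul, krammer_sigma_single,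
           kimg_A, kimg_B, kimg_C, kimg_D, kimg_E, kimg_F] <;> module)

/-- The Krammer representation maps satisfy far commutation: for `|i - k| ≥ 2`,
the maps `σ_i` and `σ_k` commute. -/
theorem krammer_far_commutation (n i k : ℕ) (hi1 : 1 ≤ i) (hin : i < n)
    (hk1 : 1 ≤ k) (hkn : k < n) (hik : i + 2 ≤ k ∨ k + 2 ≤ i) :
    (krammerσ n i).comp (krammerσ n k) = (krammerσ n k).comp (krammerσ n i) := by
  rcases hik with h | h
  · exact krammer_far_commutation_aux n i k hi1 hkn h
  · exact (krammer_far_commutation_aux n k i hk1 hin h).symm
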